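/- Let G be a finite group, let π be a unitary representation of G on a finite-dimensional complex Hilbert space H, and suppose η ∈ H does phase retrieval for π. Then for every nonzero f ∈ H, the set A = {x ∈ G : ⟨f, π(x)η⟩ ≠ 0} satisfies A · A⁻¹ = G, i.e. every g ∈ G can be written as g = a b⁻¹ with a, b ∈ A. -/

import Mathlib

def DoesPhaseRetrieval {H : Type*} [NormedAddCommGroup H] [InnerProductSpace ℂ H]
    {I : Type*} (x : I → H) : Prop :=
  ∀ f g : H, (∀ i : I, ‖(inner ℂ f (x i) : ℂ)‖ = ‖(inner ℂ g (x i) : ℂ)‖) →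
    ∃ c : ℂ, ‖c‖ = 1 ∧ f = c • g

/-- If `η` does phase retrieval for a unitary representation `π` of a finite group `G` on
a finite-dimensional complex Hilbert space, then for every nonzero `f` the support
`A = {x : ⟨f, π(x)η⟩ ≠ 0}` satisfies `A ⬝ A⁻¹ = G`. -/
theorem support_mul_support_inv_eq_univ
    {G : Type*} [Group G] [Finite G]
    {H : Type*} [NormedAddCommGroup H] [InnerProductSpace ℂ H] [FiniteDimensional ℂ H]
    (π : G →* (H ≃ₗᵢ[ℂ] H)) (η : H)
    (hη : DoesPhaseRetrieval (fun x : G => π x η))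
    (f : H) (hf : f ≠ 0) :
    ∀ g : G, ∃ a b : G, (inner ℂ f (π a η) : ℂ) ≠ 0 ∧ (inner ℂ f (π b η) : ℂ) ≠ 0 ∧
      g = a * b⁻¹ := by
  intro g
  by_contra hcon
  push_neg at hcon
  -- the key translation identity for the inner products
  have key : ∀ x : G, (inner ℂ ((π g) f) (π x η) : ℂ) = inner ℂ f (π (g⁻¹ * x) η) := by
    intro x
    have h1 : (π g) ((π (g⁻¹ * x)) η) = π x η := by
      have := map_mul π g (g⁻¹ * x)
      rw [mul_inv_cancel_left] at this
      rw [this]; rfl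
    rw [← h1, LinearIsometryEquiv.inner_map_map]
  -- at most one of the two inner products is nonzero
  have disj : ∀ x : G, (inner ℂ f (π x η) : ℂ) = 0 ∨ (inner ℂ f (π (g⁻¹ * x) η) : ℂ) = 0 := by
    intro x
    by_contra h
    push_neg at h
    exact hcon x (g⁻¹ * x) h.1 h.2 (by group)
  -- f + π(g) f and f - π(g) f have the same measurements
  have hnorm : ∀ x : G,
      ‖(inner ℂ (f + (π g) f) (π x η) : ℂ)‖ = ‖(inner ℂ (f - (π g) f) (π x η) : ℂ)‖ := by
    intro x
    rw [inner_add_left, inner_sub_left, key]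
    rcases disj x with h | h <;> rw [h] <;> simp
  obtain ⟨c, -, heq⟩ := hη (f + (π g) f) (f - (π g) f) hnorm
  -- π(g) f ≠ 0
  have hπf : (π g) f ≠ 0 := by
    intro h
    apply hf
    have : ‖f‖ = 0 := by rw [← (π g).norm_map f, h, norm_zero]
    simpa using this
  rcases eq_or_ne c 1 with h1 | h1
  · -- c = 1 forces π(g) f = 0
    rw [h1, one_smul] at heq
    apply hπf
    have : (2 : ℂ) • (π g) f = 0 := by
      have := sub_eq_zero.mpr heq
      rw [add_sub_sub_cancel] at this
      convert this using 1
      module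
    simpa using this
  · -- otherwise f is a nonzero multiple of π(g) f
    set μ : ℂ := (1 - c)⁻¹ * (-(1 + c)) with hμ
    have hc : (1 : ℂ) - c ≠ 0 := sub_ne_zero.mpr (Ne.symm h1)
    have hfμ : f = μ • (π g) f := by
      have h2 : (1 - c) • f = (-(1 + c)) • (π g) f := by
        rw [smul_sub] at heq
        rw [sub_smul, neg_smul, add_smul, one_smul, one_smul]
        rw [← sub_eq_zero] at heq ⊢
        rw [← heq]; module
      rw [hμ, mul_smul, ← h2, smul_smul, inv_mul_cancel₀ hc, one_smul]
    have hμ0 : μ ≠ 0 := by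
      intro h
      rw [h, zero_smul] at hfμ
      exact hf hfμ
    -- pick a with ⟨f, π(a)η⟩ ≠ 0 (exists since f ≠ 0 and phase retrieval)
    have hA : ∃ a : G, (inner ℂ f (π a η) : ℂ) ≠ 0 := by
      by_contra h
      push_neg at h
      obtain ⟨c', -, hc'⟩ := hη f 0 (by intro i; simp [h i])
      rw [smul_zero] at hc'
      exact hf hc'
    obtain ⟨a, ha⟩ := hA
    have hb : (inner ℂ f (π (g⁻¹ * a) η) : ℂ) ≠ 0 := by
      intro h
      apply ha
      rw [hfμ, inner_smul_left, key, h, mul_zero]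
    exact hcon a (g⁻¹ * a) ha hb (by group)
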